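/- The convolution sequence b(n) = ∑_{k=1}^{n-1} a(k)a(n-k), with a(n) = 2(4n+1)!/((n+1)!(3n+2)!), satisfies the second-order relation b(n+1)·a(n)/(b(n)·a(n+1)) = (n(n^2+16n+27)(3n+5)(3n+4)(n+2)) / ((n-1)(n^2+14n+12)(3n+8)(3n+7)(n+3)) for all n ≥ 2. -/

import Mathlib

open Filter Finset

noncomputable def a (n : ℕ) : ℝ :=
  2 * (Nat.factorial (4 * n + 1)) / ((Nat.factorial (n + 1)) * (Nat.factorial (3 * n + 2)))

noncomputable def b (n : ℕ) : ℝ := ∑ k ∈ Finset.Ico 1 n, a k * a (n - k)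

/-- Rothe numbers with step 4 : `V p k = p/(p+4k) * C(p+4k, k)` (equal to 1 at `k = 0`). -/
noncomputable def V (p k : ℕ) : ℝ :=
  if k = 0 then 1
  else p * Nat.factorial (p + 4 * k - 1) / (Nat.factorial k * Nat.factorial (p + 3 * k))

lemma V_zero_left {k : ℕ} (hk : k ≠ 0) : V 0 k = 0 := by simp [V, hk]

lemma V_k_zero (p : ℕ) : V p 0 = 1 := by simp [V]

lemma V_succ (p j : ℕ) :
    V p (j + 1) = p * Nat.factorial (p + 4 * j + 3) /
      (Nat.factorial (j + 1) * Nat.factorial (p + 3 * j + 3)) := by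
  have h1 : p + 4 * (j + 1) - 1 = p + 4 * j + 3 := by omega
  have h2 : p + 3 * (j + 1) = p + 3 * j + 3 := by omega
  simp only [V, if_neg (Nat.succ_ne_zero j), h1, h2]

lemma V_top (p j : ℕ) :
    V (p + 4) j = (p + 4) * Nat.factorial (p + 4 * j + 3) /
      (Nat.factorial j * Nat.factorial (p + 3 * j + 4)) := by
  cases j with
  | zero =>
    have h1 : p + 4 * 0 + 3 = p + 3 := by omega
    have h2 : p + 3 * 0 + 4 = (p + 3) + 1 := by omega
    have e : (Nat.factorial ((p + 3) + 1) : ℝ) = ((p : ℝ) + 4) * Nat.factorial (p + 3) := by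
      rw [Nat.factorial_succ]; push_cast; ring
    rw [V_k_zero, h1, h2, e, Nat.factorial_zero]
    have hA : (Nat.factorial (p + 3) : ℝ) ≠ 0 := by positivity
    have hp : ((p : ℝ) + 4) ≠ 0 := by positivity
    field_simp
    norm_num
  | succ i =>
    rw [V_succ]
    have h1 : p + 4 + 4 * i + 3 = p + 4 * (i + 1) + 3 := by omega
    have h2 : p + 4 + 3 * i + 3 = p + 3 * (i + 1) + 4 := by omega
    rw [h1, h2]
    push_cast
    ring

lemma V_pascal (p j : ℕ) : V (p + 1) (j + 1) = V p (j + 1) + V (p + 4) j := by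
  rw [V_succ (p + 1) j, V_succ p j, V_top p j]
  have h1 : p + 1 + 4 * j + 3 = (p + 4 * j + 3) + 1 := by omega
  have h2 : p + 1 + 3 * j + 3 = (p + 3 * j + 3) + 1 := by omega
  have h3 : p + 3 * j + 4 = (p + 3 * j + 3) + 1 := by omega
  rw [h1, h2, h3, Nat.factorial_succ ((p + 4 * j + 3)), Nat.factorial_succ (p + 3 * j + 3),
    Nat.factorial_succ j]
  have hA : (Nat.factorial (p + 4 * j + 3) : ℝ) ≠ 0 := by positivity
  have hB : (Nat.factorial j : ℝ) ≠ 0 := by positivity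
  have hC : (Nat.factorial (p + 3 * j + 3) : ℝ) ≠ 0 := by positivity
  push_cast
  field_simp
  try ring

lemma V_conv : ∀ n p q : ℕ,
    (∑ k ∈ Finset.range (n + 1), V p k * V q (n - k)) = V (p + q) n := by
  intro n
  induction n with
  | zero => intro p q; simp [V_k_zero]
  | succ n ih =>
    intro p q
    induction p with
    | zero =>
      rw [Finset.sum_eq_single 0]
      · rw [V_k_zero, Nat.sub_zero, one_mul, Nat.zero_add]
      · intro k _ hk; rw [V_zero_left hk, zero_mul]
      · intro h; exact absurd (Finset.mem_range.mpr (Nat.succ_pos _)) h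
    | succ p ihp =>
      rw [Finset.sum_range_succ']
      have key : ∀ i ∈ Finset.range (n + 1),
          V (p + 1) (i + 1) * V q (n + 1 - (i + 1))
            = V p (i + 1) * V q (n + 1 - (i + 1)) + V (p + 4) i * V q (n - i) := by
        intro i _
        have h : n + 1 - (i + 1) = n - i := by omega
        rw [V_pascal, add_mul, h]
      rw [Finset.sum_congr rfl key, Finset.sum_add_distrib]
      have h2 : ∑ i ∈ Finset.range (n + 1), V (p + 4) i * V q (n - i) = V (p + 4 + q) n :=
        ih (p + 4) q
      have h1 : ∑ i ∈ Finset.range (n + 1), V p (i + 1) * V q (n + 1 - (i + 1))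
          = V (p + q) (n + 1) - V p 0 * V q (n + 1 - 0) := by
        have h := ihp
        rw [Finset.sum_range_succ'] at h
        linarith
      rw [h1, h2, V_k_zero, V_k_zero]
      have e1 : p + 4 + q = p + q + 4 := by omega
      have e2 : p + 1 + q = p + q + 1 := by omega
      rw [e1, e2, V_pascal (p + q) n]
      ring

lemma a_zero : a 0 = 1 := by
  norm_num [a, Nat.factorial]

lemma a_eq (k : ℕ) : a k = 2 * V 2 k - V 3 k := by
  cases k with
  | zero => rw [a_zero, V_k_zero, V_k_zero]; norm_num
  | succ j =>
    rw [V_succ 2 j, V_succ 3 j]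
    simp only [a]
    have h1 : 4 * (j + 1) + 1 = 4 * j + 5 := by omega
    have h2 : 3 * (j + 1) + 2 = 3 * j + 5 := by omega
    have h3 : j + 1 + 1 = (j + 1) + 1 := rfl
    have h4 : 2 + 4 * j + 3 = 4 * j + 5 := by omega
    have h5 : 2 + 3 * j + 3 = 3 * j + 5 := by omega
    have h6 : 3 + 4 * j + 3 = (4 * j + 5) + 1 := by omega
    have h7 : 3 + 3 * j + 3 = (3 * j + 5) + 1 := by omega
    rw [h1, h2, h4, h5, h6, h7, Nat.factorial_succ (4 * j + 5), Nat.factorial_succ (3 * j + 5),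
      Nat.factorial_succ (j + 1)]
    have hA : (Nat.factorial (4 * j + 5) : ℝ) ≠ 0 := by positivity
    have hB : (Nat.factorial (j + 1) : ℝ) ≠ 0 := by positivity
    have hC : (Nat.factorial (3 * j + 5) : ℝ) ≠ 0 := by positivity
    push_cast
    field_simp
    try ring

lemma T_eq (n : ℕ) :
    (∑ k ∈ Finset.range (n + 1), a k * a (n - k))
      = 4 * V 4 n - 4 * V 5 n + V 6 n := by
  have e : ∀ k, a k * a (n - k)
      = 4 * (V 2 k * V 2 (n - k)) - 2 * (V 2 k * V 3 (n - k))
        - 2 * (V 3 k * V 2 (n - k)) + V 3 k * V 3 (n - k) := by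
    intro k; rw [a_eq k, a_eq (n - k)]; ring
  simp only [e]
  rw [Finset.sum_add_distrib, Finset.sum_sub_distrib, Finset.sum_sub_distrib,
    ← Finset.mul_sum, ← Finset.mul_sum, ← Finset.mul_sum, V_conv n 2 2, V_conv n 2 3,
    V_conv n 3 2, V_conv n 3 3]
  norm_num
  ring

lemma b_eq (n : ℕ) (hn : 1 ≤ n) :
    b n = 4 * V 4 n - 4 * V 5 n + V 6 n - 2 * a n := by
  rw [← T_eq n]
  have h0 : (∑ k ∈ Finset.range (n + 1), a k * a (n - k))
      = a 0 * a n + ((∑ k ∈ Finset.Ico 1 n, a k * a (n - k)) + a n * a (n - n)) := by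
    rw [Finset.range_eq_Ico, Finset.sum_eq_sum_Ico_succ_bot (by omega : 0 < n + 1),
      Finset.sum_Ico_succ_top (by omega : 1 ≤ n), Nat.sub_zero]
  rw [h0, Nat.sub_self, a_zero, b]
  ring

lemma b_closed (n : ℕ) (hn : 1 ≤ n) :
    b n = a n * (10 * ((n : ℝ) - 1) * ((n : ℝ)^2 + 14 * n + 12))
      / (3 * (3 * (n : ℝ) + 5) * (3 * (n : ℝ) + 4) * ((n : ℝ) + 2)) := by
  rw [b_eq n hn]
  obtain ⟨m, rfl⟩ := Nat.exists_eq_add_of_le hn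
  -- n = 1 + m
  have hV4 : V 4 (1 + m) = 4 * Nat.factorial (4 * (1 + m) + 3) /
      (Nat.factorial (1 + m) * Nat.factorial (3 * (1 + m) + 4)) := by
    have := V_top 0 (1 + m)
    simpa using this
  have hV5 : V 5 (1 + m) = 5 * Nat.factorial (4 * (1 + m) + 4) /
      (Nat.factorial (1 + m) * Nat.factorial (3 * (1 + m) + 5)) := by
    have h := V_top 1 (1 + m)
    have e1 : 1 + 4 * (1 + m) + 3 = 4 * (1 + m) + 4 := by omega
    have e2 : 1 + 3 * (1 + m) + 4 = 3 * (1 + m) + 5 := by omega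
    rw [e1, e2] at h
    norm_num at h ⊢
    convert h using 2
  have hV6 : V 6 (1 + m) = 6 * Nat.factorial (4 * (1 + m) + 5) /
      (Nat.factorial (1 + m) * Nat.factorial (3 * (1 + m) + 6)) := by
    have h := V_top 2 (1 + m)
    have e1 : 2 + 4 * (1 + m) + 3 = 4 * (1 + m) + 5 := by omega
    have e2 : 2 + 3 * (1 + m) + 4 = 3 * (1 + m) + 6 := by omega
    rw [e1, e2] at h
    norm_num at h ⊢
    convert h using 2
  set n := 1 + m with hn'
  have key : ∀ (s t : ℕ), (Nat.factorial (s + t) : ℝ)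
      = (∏ i ∈ Finset.range t, ((s : ℝ) + i + 1)) * Nat.factorial s := by
    intro s t
    induction t with
    | zero => simp
    | succ t iht =>
      rw [show s + (t + 1) = (s + t) + 1 from rfl, Nat.factorial_succ, Finset.prod_range_succ]
      push_cast
      rw [iht]
      ring
  have e43 : (Nat.factorial (4 * n + 3) : ℝ)
      = (4 * (n : ℝ) + 2) * (4 * n + 3) * Nat.factorial (4 * n + 1) := by
    have := key (4 * n + 1) 2
    rw [show 4 * n + 1 + 2 = 4 * n + 3 from by omega] at this
    rw [this, Finset.prod_range_succ, Finset.prod_range_succ]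
    push_cast; ring
  have e44 : (Nat.factorial (4 * n + 4) : ℝ)
      = (4 * (n : ℝ) + 2) * (4 * n + 3) * (4 * n + 4) * Nat.factorial (4 * n + 1) := by
    have := key (4 * n + 1) 3
    rw [show 4 * n + 1 + 3 = 4 * n + 4 from by omega] at this
    rw [this, Finset.prod_range_succ, Finset.prod_range_succ, Finset.prod_range_succ]
    push_cast; ring
  have e45 : (Nat.factorial (4 * n + 5) : ℝ)
      = (4 * (n : ℝ) + 2) * (4 * n + 3) * (4 * n + 4) * (4 * n + 5) * Nat.factorial (4 * n + 1) := by
    have := key (4 * n + 1) 4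
    rw [show 4 * n + 1 + 4 = 4 * n + 5 from by omega] at this
    rw [this, Finset.prod_range_succ, Finset.prod_range_succ, Finset.prod_range_succ,
      Finset.prod_range_succ]
    push_cast; ring
  have e34 : (Nat.factorial (3 * n + 4) : ℝ)
      = (3 * (n : ℝ) + 3) * (3 * n + 4) * Nat.factorial (3 * n + 2) := by
    have := key (3 * n + 2) 2
    rw [show 3 * n + 2 + 2 = 3 * n + 4 from by omega] at this
    rw [this, Finset.prod_range_succ, Finset.prod_range_succ]
    push_cast; ring
  have e35 : (Nat.factorial (3 * n + 5) : ℝ)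
      = (3 * (n : ℝ) + 3) * (3 * n + 4) * (3 * n + 5) * Nat.factorial (3 * n + 2) := by
    have := key (3 * n + 2) 3
    rw [show 3 * n + 2 + 3 = 3 * n + 5 from by omega] at this
    rw [this, Finset.prod_range_succ, Finset.prod_range_succ, Finset.prod_range_succ]
    push_cast; ring
  have e36 : (Nat.factorial (3 * n + 6) : ℝ)
      = (3 * (n : ℝ) + 3) * (3 * n + 4) * (3 * n + 5) * (3 * n + 6) * Nat.factorial (3 * n + 2) := by
    have := key (3 * n + 2) 4
    rw [show 3 * n + 2 + 4 = 3 * n + 6 from by omega] at this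
    rw [this, Finset.prod_range_succ, Finset.prod_range_succ, Finset.prod_range_succ,
      Finset.prod_range_succ]
    push_cast; ring
  have en1 : (Nat.factorial (n + 1) : ℝ) = ((n : ℝ) + 1) * Nat.factorial n := by
    rw [Nat.factorial_succ]; push_cast; ring
  rw [hV4, hV5, hV6]
  simp only [a]
  rw [e43, e44, e45, e34, e35, e36, en1]
  have hF1 : (Nat.factorial (4 * n + 1) : ℝ) ≠ 0 := by positivity
  have hF2 : (Nat.factorial (3 * n + 2) : ℝ) ≠ 0 := by positivity
  have hF3 : (Nat.factorial n : ℝ) ≠ 0 := by positivity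
  have hx : (0:ℝ) < (n : ℝ) := by exact_mod_cast hn
  field_simp
  ring

theorem stmt17 (n : ℕ) (hn : 2 ≤ n) :
    (b (n + 1) * a n) / (b n * a (n + 1)) =
      ((n : ℝ) * ((n : ℝ)^2 + 16 * n + 27) * (3 * n + 5) * (3 * n + 4) * (n + 2)) /
        (((n : ℝ) - 1) * ((n : ℝ)^2 + 14 * n + 12) * (3 * n + 8) * (3 * n + 7) * (n + 3)) := by
  have h1 : 1 ≤ n := by omega
  have hb : b n = a n * (10 * ((n : ℝ) - 1) * ((n : ℝ)^2 + 14 * n + 12))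
      / (3 * (3 * (n : ℝ) + 5) * (3 * (n : ℝ) + 4) * ((n : ℝ) + 2)) := b_closed n h1
  have hb1 := b_closed (n + 1) (by omega)
  push_cast at hb1
  have ha : 0 < a n := by
    unfold a
    positivity
  have ha1 : 0 < a (n + 1) := by
    unfold a
    positivity
  have hnr : (2:ℝ) ≤ (n : ℝ) := by exact_mod_cast hn
  have d1 : (n : ℝ) - 1 > 0 := by linarith
  have d2 : (n : ℝ)^2 + 14 * n + 12 > 0 := by positivity
  have d3 : (n : ℝ)^2 + 16 * n + 27 > 0 := by positivity
  rw [hb, hb1]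
  have hne : a n ≠ 0 := ne_of_gt ha
  have hne1 : a (n + 1) ≠ 0 := ne_of_gt ha1
  field_simp
  ring
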